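/- arXiv:1906.09180 — 7 statements merged into one kernel-verified Lean document; each statement's English description precedes it below -/
import Mathlib

section
/- Let φ be a CNF formula with variables x_1,…,x_n and nonempty clauses C_1,…,C_m (each clause a set of at most three literals), and let G be the graph constructed from φ as described. Then φ is satisfiable if and only if G has a dominating set of size n+1. -/
/-- `D` is a dominating set: every vertex is in `D` or adjacent to a vertex of `D`. -/
def IsDominating {V : Type*} (G : SimpleGraph V) (D : Set V) : Prop :=
  ∀ v, v ∈ D ∨ ∃ u ∈ D, G.Adj u v

/-- Vertices of the graph built from a CNF formula with `n` variables and `m`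
clauses: for each variable `i` a triangle `var i`, `pos i` (the literal `xᵢ`),
`neg i` (the literal `¬xᵢ`); for each clause `j` a vertex `cls j`; and three
extra vertices `y1, y2, y3`. -/
inductive PhiVtx (n m : ℕ) where
  | var (i : Fin n)
  | pos (i : Fin n)
  | neg (i : Fin n)
  | cls (j : Fin m)
  | y1
  | y2
  | y3
  deriving DecidableEq, Fintype

/-- Base adjacency relation of the construction (clauses are given as finite
sets of literals, a literal being a pair of a variable index and a polarity):
triangles `var i, pos i, neg i`; an edge `cls j — pos i` whenever `xᵢ`
occurs positively in clause `j` and `cls j — neg i` whenever it occurs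
negatively; `y1` adjacent to every clause vertex; edges `y1 — y2`, `y2 — y3`. -/
def phiRel {n m : ℕ} (C : Fin m → Finset (Fin n × Bool)) :
    PhiVtx n m → PhiVtx n m → Prop
  | .var i, .pos i' => i = i'
  | .var i, .neg i' => i = i'
  | .pos i, .neg i' => i = i'
  | .cls j, .pos i => (i, true) ∈ C j
  | .cls j, .neg i => (i, false) ∈ C j
  | .y1, .cls _ => True
  | .y1, .y2 => True
  | .y2, .y3 => True
  | _, _ => False

/-- The graph constructed from the CNF formula. -/
def phiGraph {n m : ℕ} (C : Fin m → Finset (Fin n × Bool)) :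
    SimpleGraph (PhiVtx n m) :=
  SimpleGraph.fromRel (phiRel C)

lemma adj_var {n m : ℕ} (C : Fin m → Finset (Fin n × Bool)) (i : Fin n) (u : PhiVtx n m)
    (h : (phiGraph C).Adj u (.var i)) : u = .pos i ∨ u = .neg i := by
  rw [phiGraph, SimpleGraph.fromRel_adj] at h
  cases u <;> simp_all [phiRel]

lemma adj_y3 {n m : ℕ} (C : Fin m → Finset (Fin n × Bool)) (u : PhiVtx n m)
    (h : (phiGraph C).Adj u .y3) : u = .y2 := by
  rw [phiGraph, SimpleGraph.fromRel_adj] at h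
  cases u <;> simp_all [phiRel]

lemma adj_cls {n m : ℕ} (C : Fin m → Finset (Fin n × Bool)) (j : Fin m) (u : PhiVtx n m)
    (h : (phiGraph C).Adj u (.cls j)) :
    u = .y1 ∨ (∃ i, u = .pos i ∧ (i, true) ∈ C j) ∨ (∃ i, u = .neg i ∧ (i, false) ∈ C j) := by
  rw [phiGraph, SimpleGraph.fromRel_adj] at h
  cases u <;> simp_all [phiRel]

/-- A CNF formula φ with `n` variables and `m` nonempty clauses of at most
three literals is satisfiable iff the constructed graph has a dominating set
of size `n + 1`. -/
theorem satisfiable_iff_dominating_phiGraph {n m : ℕ}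
    (C : Fin m → Finset (Fin n × Bool))
    (hC : ∀ j, (C j).Nonempty ∧ (C j).card ≤ 3) :
    (∃ σ : Fin n → Bool, ∀ j, ∃ l ∈ C j, σ l.1 = l.2) ↔
      (∃ D : Set (PhiVtx n m), IsDominating (phiGraph C) D ∧ D.ncard = n + 1) := by
  classical
  constructor
  · rintro ⟨σ, hσ⟩
    set F : Option (Fin n) → PhiVtx n m :=
      fun o => o.elim PhiVtx.y2 (fun i => if σ i then .pos i else .neg i) with hF
    have hFinj : Function.Injective F := by
      rintro (_ | a) (_ | b) hab <;> simp only [hF, Option.elim] at hab <;>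
        (try split_ifs at hab) <;> simp_all
    refine ⟨Set.range F, ?_, ?_⟩
    · intro v
      cases v with
      | var i =>
          right
          refine ⟨F (some i), Set.mem_range_self _, ?_⟩
          simp only [hF, Option.elim]
          split_ifs <;> simp [phiGraph, SimpleGraph.fromRel_adj, phiRel]
      | pos i =>
          by_cases h : σ i
          · left; exact ⟨some i, by simp [hF, Option.elim, h]⟩
          · right
            refine ⟨F (some i), Set.mem_range_self _, ?_⟩
            simp [hF, Option.elim, h, phiGraph, SimpleGraph.fromRel_adj, phiRel]
      | neg i =>
          by_cases h : σ i
          · right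
            refine ⟨F (some i), Set.mem_range_self _, ?_⟩
            simp [hF, Option.elim, h, phiGraph, SimpleGraph.fromRel_adj, phiRel]
          · left; exact ⟨some i, by simp [hF, Option.elim, h]⟩
      | cls j =>
          right
          obtain ⟨l, hl, hσl⟩ := hσ j
          refine ⟨F (some l.1), Set.mem_range_self _, ?_⟩
          cases hb : l.2 with
          | true =>
              rw [hb] at hσl
              simp only [hF, Option.elim, hσl, if_pos]
              have : (l.1, true) ∈ C j := by rw [← hb]; exact hl
              simp [phiGraph, SimpleGraph.fromRel_adj, phiRel, this]
          | false =>
              rw [hb] at hσl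
              simp only [hF, Option.elim, hσl]
              have : (l.1, false) ∈ C j := by rw [← hb]; exact hl
              simp [phiGraph, SimpleGraph.fromRel_adj, phiRel, this]
      | y1 =>
          right
          exact ⟨F none, Set.mem_range_self _,
            by simp [hF, Option.elim, phiGraph, SimpleGraph.fromRel_adj, phiRel]⟩
      | y2 => left; exact ⟨none, rfl⟩
      | y3 =>
          right
          exact ⟨F none, Set.mem_range_self _,
            by simp [hF, Option.elim, phiGraph, SimpleGraph.fromRel_adj, phiRel]⟩
    · rw [← Set.image_univ, Set.ncard_image_of_injective _ hFinj, Set.ncard_univ]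
      simp [Nat.card_eq_fintype_card]
  · rintro ⟨D, hdom, hcard⟩
    -- in each triangle, D contains a vertex
    have hd : ∀ i : Fin n, ∃ v ∈ D, v = PhiVtx.var i ∨ v = .pos i ∨ v = .neg i := by
      intro i
      rcases hdom (.var i) with h | ⟨u, hu, hadj⟩
      · exact ⟨_, h, Or.inl rfl⟩
      · rcases adj_var C i u hadj with h | h
        · exact ⟨u, hu, Or.inr (Or.inl h)⟩
        · exact ⟨u, hu, Or.inr (Or.inr h)⟩
    choose d hdD hdT using hd
    have he : ∃ v ∈ D, v = PhiVtx.y2 ∨ v = PhiVtx.y3 := by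
      rcases hdom .y3 with h | ⟨u, hu, hadj⟩
      · exact ⟨_, h, Or.inr rfl⟩
      · exact ⟨u, hu, Or.inl (adj_y3 C u hadj)⟩
    obtain ⟨e, heD, heT⟩ := he
    set F : Option (Fin n) → PhiVtx n m := fun o => o.elim e d with hF
    have hFinj : Function.Injective F := by
      rintro (_ | a) (_ | b) hab <;> simp only [hF, Option.elim] at hab
      · rfl
      · rcases heT with h | h <;> rcases hdT b with h' | h' | h' <;> simp_all
      · rcases heT with h | h <;> rcases hdT a with h' | h' | h' <;> simp_all
      · rcases hdT a with h | h | h <;> rcases hdT b with h' | h' | h' <;> simp_all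
    have hsub : Set.range F ⊆ D := by
      rintro v ⟨o, rfl⟩
      cases o with
      | none => exact heD
      | some i => exact hdD i
    have hrange : Set.range F = D := by
      apply Set.eq_of_subset_of_ncard_le hsub _ (Set.toFinite D)
      rw [← Set.image_univ, Set.ncard_image_of_injective _ hFinj, Set.ncard_univ, hcard]
      simp [Nat.card_eq_fintype_card]
    have hmem : ∀ v ∈ D, v = e ∨ ∃ i, v = d i := by
      intro v hv
      rw [← hrange] at hv
      obtain ⟨o, rfl⟩ := hv
      cases o with
      | none => exact Or.inl rfl
      | some i => exact Or.inr ⟨i, rfl⟩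
    -- pos i and neg i are not both in D
    have hpn : ∀ i : Fin n, ¬(PhiVtx.pos i ∈ D ∧ PhiVtx.neg i ∈ D) := by
      rintro i ⟨hp, hq⟩
      have h1 : PhiVtx.pos (n := n) (m := m) i = d i := by
        rcases hmem _ hp with h | ⟨i', h⟩
        · rcases heT with h' | h' <;> simp_all
        · rcases hdT i' with h' | h' | h' <;> simp_all
      have h2 : PhiVtx.neg (n := n) (m := m) i = d i := by
        rcases hmem _ hq with h | ⟨i', h⟩
        · rcases heT with h' | h' <;> simp_all
        · rcases hdT i' with h' | h' | h' <;> simp_all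
      have h3 := h1.trans h2.symm
      simp at h3
    have hy1 : PhiVtx.y1 (n := n) (m := m) ∉ D := by
      intro h
      rcases hmem _ h with h' | ⟨i', h'⟩
      · rcases heT with h'' | h'' <;> simp_all
      · rcases hdT i' with h'' | h'' | h'' <;> simp_all
    have hclsD : ∀ j, PhiVtx.cls (n := n) j ∉ D := by
      intro j h
      rcases hmem _ h with h' | ⟨i', h'⟩
      · rcases heT with h'' | h'' <;> simp_all
      · rcases hdT i' with h'' | h'' | h'' <;> simp_all
    refine ⟨fun i => decide (PhiVtx.pos (n := n) (m := m) i ∈ D), fun j => ?_⟩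
    rcases hdom (.cls j) with h | ⟨u, hu, hadj⟩
    · exact absurd h (hclsD j)
    · rcases adj_cls C j u hadj with rfl | ⟨i, rfl, hi⟩ | ⟨i, rfl, hi⟩
      · exact absurd hu hy1
      · exact ⟨(i, true), hi, by simp [hu]⟩
      · refine ⟨(i, false), hi, ?_⟩
        have : PhiVtx.pos (n := n) (m := m) i ∉ D := fun hp => hpn i ⟨hp, hu⟩
        simp [this]
end

section
/- Let G be a finite simple graph whose vertex set is partitioned into blocks C_0, C_1, …, C_k with k ≥ 1 and C_i ≠ ∅ for all 1 ≤ i ≤ k, and let G' be the graph constructed from G as described. Then G has a colourful dominating set if and only if G' has a dominating set of size k. -/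
/-- A colourful dominating set for a graph with blocks `C 0, C 1, …, C k`:
it contains exactly one vertex from each block `C i`, `i ≥ 1` (and none from
`C 0`), and every vertex of `C 0` belongs to it or is adjacent to one of its
vertices. -/
def ColourfulDominating {V : Type*} {k : ℕ} (G : SimpleGraph V)
    (C : Fin (k + 1) → Set V) (D : Set V) : Prop :=
  (∀ i, i ≠ 0 → (D ∩ C i).ncard = 1) ∧ D ∩ C 0 = ∅ ∧
    ∀ v ∈ C 0, v ∈ D ∨ ∃ u ∈ D, G.Adj u v

/-- Base relation for the construction: keep the edges of `G`; make each block
`C i`, `i ≥ 1`, a clique; add a new vertex `aᵢ` (encoded `Sum.inr i`) adjacent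
exactly to `C i` for `i ≥ 1`; and add a new vertex `a₀` adjacent to every
vertex of `C 0 ∪ C 1 ∪ … ∪ C k`. -/
def colorRel {V : Type*} {k : ℕ} (G : SimpleGraph V) (C : Fin (k + 1) → Set V) :
    V ⊕ Fin (k + 1) → V ⊕ Fin (k + 1) → Prop
  | .inl u, .inl v => G.Adj u v ∨ ∃ i, i ≠ 0 ∧ u ∈ C i ∧ v ∈ C i
  | .inr i, .inl u => (i = 0 ∧ u ∈ ⋃ j, C j) ∨ (i ≠ 0 ∧ u ∈ C i)
  | _, _ => False

/-- The graph `G'` constructed from `G` and its blocks. -/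
def colorGraph {V : Type*} {k : ℕ} (G : SimpleGraph V)
    (C : Fin (k + 1) → Set V) : SimpleGraph (V ⊕ Fin (k + 1)) :=
  SimpleGraph.fromRel (colorRel G C)

/-- Let `G` be a finite graph whose vertex set is partitioned into blocks
`C 0, …, C k` with `k ≥ 1` and `C i ≠ ∅` for `i ≥ 1`. Then `G` has a
colourful dominating set iff the constructed graph `G'` has a dominating set
of size `k`. -/
theorem colourfulDominating_iff_dominating {V : Type*} [Fintype V] {k : ℕ}
    (hk : 1 ≤ k) (G : SimpleGraph V) (C : Fin (k + 1) → Set V)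
    (hdisj : ∀ i j, i ≠ j → Disjoint (C i) (C j))
    (hcover : (⋃ i, C i) = Set.univ)
    (hne : ∀ i, i ≠ 0 → (C i).Nonempty) :
    (∃ D : Set V, ColourfulDominating G C D) ↔
      (∃ D : Set (V ⊕ Fin (k + 1)),
        IsDominating (colorGraph G C) D ∧ D.ncard = k) := by
  constructor
  · rintro ⟨D, h1, h0, hdom⟩
    have h1' : ∀ j : Fin k, ∃ a, D ∩ C j.succ = {a} := fun j =>
      Set.ncard_eq_one.mp (h1 j.succ (Fin.succ_ne_zero j))
    choose g hg using h1'
    have hgD : ∀ j, g j ∈ D ∧ g j ∈ C j.succ := by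
      intro j
      have : g j ∈ ({g j} : Set V) := rfl
      rwa [← hg j] at this
    have hginj : Function.Injective g := by
      intro j j' h
      by_contra hne'
      have hd := hdisj j.succ j'.succ (fun hh => hne' (Fin.succ_injective _ hh))
      exact Set.disjoint_left.mp hd (hgD j).2 (h ▸ (hgD j').2)
    have hD : D = Set.range g := by
      ext v
      constructor
      · intro hv
        have hv2 : v ∈ ⋃ i, C i := hcover ▸ Set.mem_univ v
        obtain ⟨i, hi⟩ := Set.mem_iUnion.mp hv2
        rcases eq_or_ne i 0 with rfl | hi0
        · exact absurd (Set.mem_inter hv hi) (by simp [h0])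
        · obtain ⟨j, rfl⟩ := Fin.exists_succ_eq.mpr hi0
          have : v ∈ D ∩ C j.succ := ⟨hv, hi⟩
          rw [hg j] at this
          exact ⟨j, this.symm⟩
      · rintro ⟨j, rfl⟩; exact (hgD j).1
    refine ⟨Sum.inl '' D, ?_, ?_⟩
    · intro w
      rcases w with v | i
      · have hv2 : v ∈ ⋃ i, C i := hcover ▸ Set.mem_univ v
        obtain ⟨i, hi⟩ := Set.mem_iUnion.mp hv2
        rcases eq_or_ne i 0 with rfl | hi0
        · rcases hdom v hi with hv | ⟨u, hu, hadj⟩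
          · exact Or.inl ⟨v, hv, rfl⟩
          · refine Or.inr ⟨Sum.inl u, ⟨u, hu, rfl⟩, ?_⟩
            rw [colorGraph, SimpleGraph.fromRel_adj]
            exact ⟨fun hh => hadj.ne (Sum.inl_injective hh),
              Or.inl (Or.inl hadj)⟩
        · obtain ⟨j, rfl⟩ := Fin.exists_succ_eq.mpr hi0
          rcases eq_or_ne (g j) v with rfl | hne'
          · exact Or.inl ⟨g j, (hgD j).1, rfl⟩
          · refine Or.inr ⟨Sum.inl (g j), ⟨g j, (hgD j).1, rfl⟩, ?_⟩
            rw [colorGraph, SimpleGraph.fromRel_adj]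
            exact ⟨fun hh => hne' (Sum.inl_injective hh),
              Or.inl (Or.inr ⟨j.succ, Fin.succ_ne_zero j, (hgD j).2, hi⟩)⟩
      · rcases eq_or_ne i 0 with rfl | hi0
        · refine Or.inr ⟨Sum.inl (g ⟨0, hk⟩), ⟨g ⟨0, hk⟩, (hgD _).1, rfl⟩, ?_⟩
          rw [colorGraph, SimpleGraph.fromRel_adj]
          refine ⟨Sum.inl_ne_inr, Or.inr (Or.inl ⟨rfl, ?_⟩)⟩
          exact Set.mem_iUnion.mpr ⟨_, (hgD ⟨0, hk⟩).2⟩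
        · obtain ⟨j, rfl⟩ := Fin.exists_succ_eq.mpr hi0
          refine Or.inr ⟨Sum.inl (g j), ⟨g j, (hgD j).1, rfl⟩, ?_⟩
          rw [colorGraph, SimpleGraph.fromRel_adj]
          exact ⟨Sum.inl_ne_inr, Or.inr (Or.inr ⟨Fin.succ_ne_zero j, (hgD j).2⟩)⟩
    · rw [hD, Set.ncard_image_of_injective _ Sum.inl_injective, ← Set.image_univ,
        Set.ncard_image_of_injective _ hginj, Set.ncard_univ]
      simp
  · rintro ⟨D', hdom', hcard⟩
    set S : Fin k → Set (V ⊕ Fin (k + 1)) :=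
      fun j => insert (Sum.inr j.succ) (Sum.inl '' C j.succ) with hS
    have hmeet : ∀ j : Fin k, ∃ w, w ∈ D' ∧ w ∈ S j := by
      intro j
      rcases hdom' (Sum.inr j.succ) with h | ⟨w, hw, hadj⟩
      · exact ⟨_, h, Set.mem_insert _ _⟩
      · rw [colorGraph, SimpleGraph.fromRel_adj] at hadj
        obtain ⟨-, h⟩ := hadj
        rcases w with u | i
        · rcases h with h | (⟨h0, -⟩ | ⟨-, hu⟩)
          · exact h.elim
          · exact absurd h0 (Fin.succ_ne_zero j)
          · exact ⟨Sum.inl u, hw, Set.mem_insert_of_mem _ ⟨u, hu, rfl⟩⟩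
        · rcases h with h | h
          · exact h.elim
          · exact h.elim
    choose t ht using hmeet
    have htinj : Function.Injective t := by
      intro j j' h
      by_contra hne'
      have hd := hdisj j.succ j'.succ (fun hh => hne' (Fin.succ_injective _ hh))
      have h1 := (ht j).2
      have h2 := h ▸ (ht j').2
      rcases h1 with h1 | ⟨u, hu, he1⟩
      · rcases h2 with h2 | ⟨u, hu, he2⟩
        · exact hne' (Fin.succ_injective _ (Sum.inr_injective (h1.symm.trans h2)))
        · exact absurd (he2.trans h1) (by simp)
      · rcases h2 with h2 | ⟨u', hu', he2⟩
        · exact absurd (he1.trans h2) (by simp)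
        · have : u = u' := Sum.inl_injective (he1.trans he2.symm)
          exact Set.disjoint_left.mp hd hu (this ▸ hu')
    have hrange : Set.range t = D' := by
      refine Set.eq_of_subset_of_ncard_le ?_ ?_ (Set.toFinite _)
      · rintro w ⟨j, rfl⟩; exact (ht j).1
      · rw [hcard, ← Set.image_univ, Set.ncard_image_of_injective _ htinj,
          Set.ncard_univ]
        simp
    have hchoice : ∀ j : Fin k, (C j.succ).Nonempty := fun j => hne _ (Fin.succ_ne_zero j)
    set d : Fin k → V :=
      fun j => Sum.elim id (fun _ => (hchoice j).some) (t j) with hd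
    have hdC : ∀ j, d j ∈ C j.succ := by
      intro j
      rcases (ht j).2 with h | ⟨u, hu, heq⟩
      · simp only [hd, h, Sum.elim_inr]
        exact (hchoice j).some_mem
      · simp only [hd, ← heq, Sum.elim_inl, id]
        exact hu
    refine ⟨Set.range d, ?_, ?_, ?_⟩
    · intro i hi0
      obtain ⟨j, rfl⟩ := Fin.exists_succ_eq.mpr hi0
      have : Set.range d ∩ C j.succ = {d j} := by
        ext v
        constructor
        · rintro ⟨⟨j', rfl⟩, hv⟩
          rcases eq_or_ne j' j with rfl | hne'
          · rfl
          · exact absurd hv (Set.disjoint_left.mp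
              (hdisj j'.succ j.succ (fun hh => hne' (Fin.succ_injective _ hh))) (hdC j'))
        · rintro rfl
          exact ⟨⟨j, rfl⟩, hdC j⟩
      rw [this, Set.ncard_singleton]
    · ext v
      simp only [Set.mem_inter_iff, Set.mem_empty_iff_false, iff_false, not_and]
      rintro ⟨j, rfl⟩
      exact fun hv => Set.disjoint_left.mp
        (hdisj j.succ 0 (Fin.succ_ne_zero j)) (hdC j) hv
    · intro v hv
      rcases hdom' (Sum.inl v) with hmem | ⟨w, hw, hadj⟩
      · obtain ⟨j, hj⟩ := hrange.symm ▸ hmem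
        rcases (ht j).2 with h | ⟨u, hu, heq⟩
        · exact absurd (hj.symm.trans h) (by simp)
        · have : u = v := Sum.inl_injective (heq.trans hj)
          exact absurd hv (Set.disjoint_left.mp
            (hdisj j.succ 0 (Fin.succ_ne_zero j)) (this ▸ hu))
      · obtain ⟨j, hj⟩ := hrange.symm ▸ hw
        rw [colorGraph, SimpleGraph.fromRel_adj] at hadj
        obtain ⟨-, h⟩ := hadj
        rcases (ht j).2 with hw' | ⟨u, hu, heq⟩
        · rw [← hj, hw'] at h
          rcases h with (⟨h0, -⟩ | ⟨-, hvC⟩) | h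
          · exact absurd h0 (Fin.succ_ne_zero j)
          · exact absurd hv (Set.disjoint_left.mp
              (hdisj j.succ 0 (Fin.succ_ne_zero j)) hvC)
          · exact h.elim
        · rw [← hj, ← heq] at h
          have hGadj : G.Adj u v := by
            rcases h with (h | ⟨i, hi0, -, hvC⟩) | (h | ⟨i, hi0, hvC, -⟩)
            · exact h
            · exact absurd hv (Set.disjoint_left.mp (hdisj i 0 hi0) hvC)
            · exact h.symm
            · exact absurd hv (Set.disjoint_left.mp (hdisj i 0 hi0) hvC)
          have hdju : d j = u := by
            simp only [hd, ← heq, Sum.elim_inl, id]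
          exact Or.inr ⟨d j, ⟨j, rfl⟩, hdju ▸ hGadj⟩
end

section
/- Let G be a finite simple graph, X ⊆ V(G) a 4-independent set, and R := V(G) ∖ N[X] the residual set. If N^2(x) ∩ R ≠ ∅ for every x ∈ X, then |R| ≥ |X|. -/
/-- A set `X` is `r`-independent if between any two distinct vertices of `X`
there is no walk of length at most `r`. -/
def rIndependent {V : Type*} (G : SimpleGraph V) (r : ℕ) (X : Set V) : Prop :=
  ∀ x ∈ X, ∀ y ∈ X, x ≠ y → ∀ p : G.Walk x y, r < p.length

/-- The closed neighbourhood `N[X]` of a set of vertices `X`. -/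
def closedNbhdSet {V : Type*} (G : SimpleGraph V) (X : Set V) : Set V :=
  X ∪ ⋃ x ∈ X, G.neighborSet x

/-- `N²[x]`: the set of vertices at distance at most `2` from `x`. -/
def ball2 {V : Type*} (G : SimpleGraph V) (x : V) : Set V :=
  {v | ∃ p : G.Walk x v, p.length ≤ 2}

/-- Let `X` be a `4`-independent set of a finite simple graph `G` and
`R = V(G) ∖ N[X]` the residual set.  If `N²(x) ∩ R ≠ ∅` for every `x ∈ X`,
then `|R| ≥ |X|`. -/
theorem residual_ge_of_fourIndependent {V : Type*} [Fintype V]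
    (G : SimpleGraph V) (X : Set V) (hX : rIndependent G 4 X)
    (h : ∀ x ∈ X, ((ball2 G x \ {x}) ∩ (closedNbhdSet G X)ᶜ).Nonempty) :
    X.ncard ≤ ((closedNbhdSet G X)ᶜ).ncard := by
  classical
  choose f hf using fun x (hx : x ∈ X) => h x hx
  have hmaps : ∀ x (hx : x ∈ X), f x hx ∈ (closedNbhdSet G X)ᶜ :=
    fun x hx => (hf x hx).2
  have hball : ∀ x (hx : x ∈ X), ∃ p : G.Walk x (f x hx), p.length ≤ 2 :=
    fun x hx => (hf x hx).1.1
  -- build global function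
  let g : V → V := fun x => if hx : x ∈ X then f x hx else x
  have hgmem : ∀ x ∈ X, g x ∈ (closedNbhdSet G X)ᶜ := by
    intro x hx; simp only [g, dif_pos hx]; exact hmaps x hx
  have hinj : Set.InjOn g X := by
    intro x hx y hy hxy
    by_contra hne
    simp only [g, dif_pos hx, dif_pos hy] at hxy
    obtain ⟨p, hp⟩ := hball x hx
    obtain ⟨q, hq⟩ := hball y hy
    have := hX x hx y hy hne (p.append ((q.reverse).copy hxy.symm rfl))
    rw [SimpleGraph.Walk.length_append] at this
    rw [SimpleGraph.Walk.length_copy, SimpleGraph.Walk.length_reverse] at this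
    omega
  calc X.ncard = (g '' X).ncard := (Set.ncard_image_of_injOn hinj).symm
    _ ≤ ((closedNbhdSet G X)ᶜ).ncard := by
        apply Set.ncard_le_ncard _ (Set.toFinite _)
        rintro _ ⟨x, hx, rfl⟩
        exact hgmem x hx
end

section
/- Let G be a finite simple graph, X ⊆ V(G) a 4-independent set, R := V(G) ∖ N[X] the residual set, and x ∈ X a vertex with N^2(x) ∩ R = ∅. Then N^2[x] = N[x] (so no vertex outside N[x] is adjacent to a vertex of N[x]) and ds(G) = ds(G − N[x]) + 1, where G − N[x] is the induced subgraph on V(G) ∖ N[x]. -/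
/-- The closed neighbourhood `N[v]` of a vertex `v`. -/
def closedNbhd {V : Type*} (G : SimpleGraph V) (v : V) : Set V :=
  insert v (G.neighborSet v)

/-- The domination number: the minimum size of a dominating set. -/
noncomputable def dsNum {V : Type*} (G : SimpleGraph V) : ℕ :=
  sInf {n | ∃ D : Set V, IsDominating G D ∧ D.ncard = n}

/-- Let `X` be a `4`-independent set of a finite simple graph `G`, `R` the
residual set, and `x ∈ X` a vertex with `N²(x) ∩ R = ∅`.  Then
`N²[x] = N[x]` and `ds(G) = ds(G − N[x]) + 1`, where `G − N[x]` is the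
subgraph induced on `V(G) ∖ N[x]`. -/
theorem dsNum_remove_closedNbhd {V : Type*} [Fintype V]
    (G : SimpleGraph V) (X : Set V) (hX : rIndependent G 4 X)
    (x : V) (hx : x ∈ X)
    (h : (ball2 G x \ {x}) ∩ (closedNbhdSet G X)ᶜ = ∅) :
    ball2 G x = closedNbhd G x ∧
      dsNum G = dsNum (G.induce (closedNbhd G x)ᶜ) + 1 := by
  classical
  have hball : ball2 G x = closedNbhd G x := by
    apply Set.Subset.antisymm
    · rintro v ⟨p, hp⟩
      by_cases hvx : v = x
      · subst hvx; exact Set.mem_insert _ _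
      · have hv : v ∈ closedNbhdSet G X := by
          by_contra hc
          have hmem : v ∈ (ball2 G x \ {x}) ∩ (closedNbhdSet G X)ᶜ :=
            ⟨⟨⟨p, hp⟩, hvx⟩, hc⟩
          rw [h] at hmem; exact hmem
        rcases hv with hv | hv
        · exact absurd (hX x hx v hv (Ne.symm (by exact hvx)) p) (by omega)
        · simp only [Set.mem_iUnion] at hv
          obtain ⟨y, hy, hadj⟩ := hv
          have hadj' : G.Adj y v := hadj
          by_cases hyx : y = x
          · subst hyx
            exact Set.mem_insert_of_mem _ hadj
          · have h5 := hX x hx y hy (Ne.symm hyx) (p.concat hadj'.symm)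
            rw [SimpleGraph.Walk.length_concat] at h5
            omega
    · intro v hv
      rcases Set.mem_insert_iff.mp hv with rfl | hv
      · exact ⟨SimpleGraph.Walk.nil, by simp⟩
      · have hadj : G.Adj x v := hv
        exact ⟨SimpleGraph.Walk.cons hadj SimpleGraph.Walk.nil, by simp⟩
  refine ⟨hball, ?_⟩
  -- no edge crosses the boundary of N[x]
  have hcross : ∀ u v : V, u ∈ closedNbhd G x → G.Adj u v → v ∈ closedNbhd G x := by
    intro u v hu hadj
    rw [← hball]
    rcases Set.mem_insert_iff.mp hu with rfl | hu
    · exact ⟨SimpleGraph.Walk.cons hadj SimpleGraph.Walk.nil, by simp⟩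
    · have hxu : G.Adj x u := hu
      exact ⟨SimpleGraph.Walk.cons hxu (SimpleGraph.Walk.cons hadj SimpleGraph.Walk.nil), by simp⟩
  set s : Set V := (closedNbhd G x)ᶜ with hs
  set H : SimpleGraph s := G.induce s with hH
  have hHadj : ∀ u v : s, H.Adj u v ↔ G.Adj (u : V) (v : V) := by
    intro u v; rfl
  have hSG : {n | ∃ D : Set V, IsDominating G D ∧ D.ncard = n}.Nonempty :=
    ⟨(Set.univ : Set V).ncard, Set.univ, fun v => Or.inl trivial, rfl⟩
  have hSH : {n | ∃ D : Set s, IsDominating H D ∧ D.ncard = n}.Nonempty :=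
    ⟨(Set.univ : Set s).ncard, Set.univ, fun v => Or.inl trivial, rfl⟩
  have hmemG : ∃ D : Set V, IsDominating G D ∧ D.ncard = dsNum G := Nat.sInf_mem hSG
  have hmemH : ∃ D : Set s, IsDominating H D ∧ D.ncard = dsNum H := Nat.sInf_mem hSH
  obtain ⟨D, hD, hDcard⟩ := hmemG
  obtain ⟨D', hD', hD'card⟩ := hmemH
  -- x is dominated, so D meets N[x]
  obtain ⟨w, hwD, hwN⟩ : ∃ w ∈ D, w ∈ closedNbhd G x := by
    rcases hD x with hxD | ⟨u, huD, huadj⟩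
    · exact ⟨x, hxD, Set.mem_insert _ _⟩
    · exact ⟨u, huD, hcross x u (Set.mem_insert _ _) huadj.symm⟩
  -- ≤ : lift D' and add x
  have hle : dsNum G ≤ dsNum H + 1 := by
    have hdom : IsDominating G (insert x (Subtype.val '' D')) := by
      intro v
      by_cases hv : v ∈ closedNbhd G x
      · rcases Set.mem_insert_iff.mp hv with rfl | hv
        · exact Or.inl (Set.mem_insert _ _)
        · exact Or.inr ⟨x, Set.mem_insert _ _, hv⟩
      · rcases hD' ⟨v, hv⟩ with hmem | ⟨u, huD, huadj⟩
        · exact Or.inl (Set.mem_insert_of_mem _ ⟨⟨v, hv⟩, hmem, rfl⟩)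
        · exact Or.inr ⟨u, Set.mem_insert_of_mem _ ⟨u, huD, rfl⟩, (hHadj u ⟨v, hv⟩).mp huadj⟩
    have hxnot : x ∉ Subtype.val '' D' := by
      intro hmem
      obtain ⟨⟨y, hy⟩, -, heq⟩ := hmem
      exact hy (heq ▸ Set.mem_insert _ _)
    have hcard : (insert x (Subtype.val '' D')).ncard = D'.ncard + 1 := by
      rw [Set.ncard_insert_of_notMem hxnot (Set.toFinite _),
        Set.ncard_image_of_injective _ Subtype.val_injective]
    have : dsNum G ≤ D'.ncard + 1 :=
      Nat.sInf_le ⟨insert x (Subtype.val '' D'), hdom, hcard⟩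
    omega
  -- ≥ : restrict D to s
  have hge : dsNum H + 1 ≤ dsNum G := by
    have hdom : IsDominating H {v : s | (v : V) ∈ D} := by
      intro v
      rcases hD v with hmem | ⟨u, huD, huadj⟩
      · exact Or.inl hmem
      · have hus : u ∈ s := by
          intro hu
          exact v.2 (hcross u v hu huadj)
        exact Or.inr ⟨⟨u, hus⟩, huD, (hHadj ⟨u, hus⟩ v).mpr huadj⟩
    have hsub : Subtype.val '' {v : s | (v : V) ∈ D} ⊆ D \ {w} := by
      rintro _ ⟨⟨y, hy⟩, hyD, rfl⟩
      refine ⟨hyD, fun hyw => hy ?_⟩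
      have hyw' : y = w := hyw
      rw [hyw']; exact hwN
    have hcard : {v : s | (v : V) ∈ D}.ncard ≤ D.ncard - 1 := by
      have h1 : {v : s | (v : V) ∈ D}.ncard = (Subtype.val '' {v : s | (v : V) ∈ D}).ncard :=
        (Set.ncard_image_of_injective _ Subtype.val_injective).symm
      have h2 : (Subtype.val '' {v : s | (v : V) ∈ D}).ncard ≤ (D \ {w}).ncard :=
        Set.ncard_le_ncard hsub (Set.toFinite _)
      have h3 : (D \ {w}).ncard = D.ncard - 1 :=
        Set.ncard_diff_singleton_of_mem hwD
      omega
    have hDpos : 1 ≤ D.ncard := by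
      have : D.Nonempty := ⟨w, hwD⟩
      have := (Set.ncard_pos (Set.toFinite D)).mpr this
      omega
    have hH1 : dsNum H ≤ D.ncard - 1 :=
      le_trans (Nat.sInf_le ⟨_, hdom, rfl⟩) hcard
    omega
  omega
end

section
/- Let G be a finite simple graph, X ⊆ V(G) a 3-independent set, R := V(G) ∖ N[X] the residual set, x ∈ X, H := G[N^2[x]] the subgraph induced on N^2[x], and R' := N^2[x] ∩ R. Then for all A, B ⊆ R' there exists an (A,B)-dominator of (H, R') of size at most |A| + |B| + 1. -/
/-- `D` is an `(A,B)`-dominator of the boundaried graph `(H, R')`: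
`D ∩ R' = A` and every vertex of `(V(H) ∖ R') ∪ B` is in `D` or adjacent to a
vertex of `D`. -/
def IsABDominator {W : Type*} (H : SimpleGraph W) (R' A B D : Set W) : Prop :=
  D ∩ R' = A ∧ ∀ v, (v ∉ R' ∨ v ∈ B) → v ∈ D ∨ ∃ u ∈ D, H.Adj u v

/-- Let `X` be a `3`-independent set of a finite simple graph `G`, `R` the
residual set, `x ∈ X`, `H = G[N²[x]]` and `R' = N²[x] ∩ R`.  Then for all
`A, B ⊆ R'` there is an `(A,B)`-dominator of `(H, R')` of size at most
`|A| + |B| + 1`. -/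
theorem exists_small_ABdominator {V : Type*} [Fintype V]
    (G : SimpleGraph V) (X : Set V) (hX : rIndependent G 3 X)
    (x : V) (hx : x ∈ X)
    (A B : Set ↥(ball2 G x))
    (hA : A ⊆ Subtype.val ⁻¹' (closedNbhdSet G X)ᶜ)
    (hB : B ⊆ Subtype.val ⁻¹' (closedNbhdSet G X)ᶜ) :
    ∃ D : Set ↥(ball2 G x),
      IsABDominator (G.induce (ball2 G x))
        (Subtype.val ⁻¹' (closedNbhdSet G X)ᶜ) A B D ∧
      D.ncard ≤ A.ncard + B.ncard + 1 := by
  classical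
  have xball : x ∈ ball2 G x := ⟨SimpleGraph.Walk.nil, by simp⟩
  have xN : x ∈ closedNbhdSet G X := Or.inl hx
  -- claim1 : any vertex of N²[x] that is in N[X] is in N[x]
  have claim1 : ∀ v : ↥(ball2 G x), v.val ∈ closedNbhdSet G X →
      v.val = x ∨ G.Adj x v.val := by
    rintro ⟨v, p, hp⟩ hv
    rcases hv with hv | hv
    · by_cases hvx : v = x
      · exact Or.inl hvx
      · exact absurd hp (by
          have := hX x hx v hv (fun h => hvx h.symm) p
          omega)
    · simp only [Set.mem_iUnion, SimpleGraph.mem_neighborSet] at hv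
      obtain ⟨y, hy, hadj⟩ := hv
      by_cases hyx : y = x
      · exact Or.inr (hyx ▸ hadj)
      · exfalso
        have hq := hX x hx y hy (fun h => hyx h.symm) (p.concat hadj.symm)
        rw [SimpleGraph.Walk.length_concat] at hq
        omega
  -- for each b ∈ B there is a midpoint
  have key : ∀ b : ↥(ball2 G x), ∃ m : ↥(ball2 G x),
      b ∈ B → G.Adj x m.val ∧ G.Adj m.val b.val := by
    intro b
    by_cases hb : b ∈ B
    · have hbR : b.val ∉ closedNbhdSet G X := hB hb
      obtain ⟨v, p, hp⟩ := b
      cases p with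
      | nil => exact absurd xN hbR
      | cons h q =>
        cases q with
        | nil =>
          exfalso
          exact hbR (Or.inr (Set.mem_biUnion hx h))
        | cons h2 q2 =>
          cases q2 with
          | nil =>
            refine ⟨⟨_, SimpleGraph.Walk.cons h SimpleGraph.Walk.nil, by simp⟩,
              fun _ => ⟨h, h2⟩⟩
          | cons h3 q3 =>
            exfalso
            simp [SimpleGraph.Walk.length_cons] at hp
    · exact ⟨⟨x, xball⟩, fun h => absurd h hb⟩
  choose mid hmid using key
  refine ⟨insert ⟨x, xball⟩ (A ∪ mid '' B), ⟨?_, ?_⟩, ?_⟩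
  · -- D ∩ R' = A
    ext v
    simp only [Set.mem_inter_iff, Set.mem_insert_iff, Set.mem_union,
      Set.mem_preimage, Set.mem_compl_iff]
    constructor
    · rintro ⟨hv1 | hv1 | hv1, hv2⟩
      · exact absurd (hv1 ▸ xN) hv2
      · exact hv1
      · obtain ⟨b, hb, rfl⟩ := hv1
        exact absurd (Or.inr (Set.mem_biUnion hx ((hmid b hb).1))) hv2
    · intro hv
      exact ⟨Or.inr (Or.inl hv), hA hv⟩
  · -- domination
    intro v hv
    rcases hv with hv | hv
    · simp only [Set.mem_preimage, Set.mem_compl_iff, not_not] at hv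
      rcases claim1 v hv with h | h
      · exact Or.inl (Or.inl (Subtype.ext h))
      · exact Or.inr ⟨⟨x, xball⟩, Or.inl rfl, h⟩
    · exact Or.inr ⟨mid v, Or.inr (Or.inr ⟨v, hv, rfl⟩), (hmid v hv).2⟩
  · -- cardinality
    calc (insert (⟨x, xball⟩ : ↥(ball2 G x)) (A ∪ mid '' B)).ncard
        ≤ (A ∪ mid '' B).ncard + 1 := Set.ncard_insert_le _ _
      _ ≤ A.ncard + (mid '' B).ncard + 1 := by
          have := Set.ncard_union_le A (mid '' B)
          omega
      _ ≤ A.ncard + B.ncard + 1 := by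
          have := Set.ncard_image_le (f := mid) (s := B) (Set.toFinite B)
          omega
end

section
/- Let H be a finite simple graph, S ⊆ V(H), R' ⊆ S, and x ∈ S ∖ R' such that Y := V(H) ∖ S is an independent set, every vertex of Y is adjacent to x, and every neighbour of a vertex of Y lies in S. Partition Y into twin classes Y_1,…,Y_t (maximal subsets of Y whose vertices have identical neighbourhoods in H), for each class keep min(2, |Y_i|) of its vertices to obtain Y' ⊆ Y, and let H' := H[S ∪ Y'] be the induced subgraph. Then for all A, B ⊆ R', the minimum size of an (A,B)-dominator of (H, R') equals the minimum size of an (A,B)-dominator of (H', R'). -/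
open Set

private lemma sInf_eq_of_le {s t : Set ℕ} (h1 : ∀ n ∈ s, ∃ m ∈ t, m ≤ n)
    (h2 : ∀ n ∈ t, ∃ m ∈ s, m ≤ n) : sInf s = sInf t := by
  rcases s.eq_empty_or_nonempty with hs | hs
  · rcases t.eq_empty_or_nonempty with ht | ht
    · rw [hs, ht]
    · obtain ⟨n, hn⟩ := ht
      obtain ⟨m, hm, -⟩ := h2 n hn
      simp [hs] at hm
  · have ht : t.Nonempty := by
      obtain ⟨n, hn⟩ := hs
      obtain ⟨m, hm, -⟩ := h1 n hn
      exact ⟨m, hm⟩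
    apply le_antisymm
    · obtain ⟨m, hm, hle⟩ := h2 _ (Nat.sInf_mem ht)
      exact le_trans (Nat.sInf_le hm) hle
    · obtain ⟨m, hm, hle⟩ := h1 _ (Nat.sInf_mem hs)
      exact le_trans (Nat.sInf_le hm) hle

/-- Twin reduction: let `H` be a finite graph, `S ⊆ V(H)`, `R' ⊆ S` and
`x ∈ S ∖ R'` such that `Y = V(H) ∖ S` is independent, every vertex of `Y` is
adjacent to `x`, and all neighbours of `Y`-vertices lie in `S`.  Let
`Y' ⊆ Y` keep exactly `min(2, |Yᵢ|)` vertices of each twin class `Yᵢ` of `Y`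
(a twin class being a maximal set of vertices of `Y` with identical
neighbourhoods), and set `H' = H[S ∪ Y']`.  Then for all `A, B ⊆ R'` the
minimum size of an `(A,B)`-dominator of `(H, R')` equals the minimum size of
an `(A,B)`-dominator of `(H', R')`. -/
theorem twin_reduction_ABdominator {W : Type*} [Fintype W]
    (H : SimpleGraph W) (S R' : Set W) (hR'S : R' ⊆ S)
    (x : W) (hxS : x ∈ S) (hxR' : x ∉ R')
    (hind : ∀ y ∈ Sᶜ, ∀ z ∈ Sᶜ, ¬H.Adj y z)
    (hadj : ∀ y ∈ Sᶜ, H.Adj x y)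
    (hnbr : ∀ y ∈ Sᶜ, ∀ z, H.Adj y z → z ∈ S)
    (Y' : Set W) (hY'sub : Y' ⊆ Sᶜ)
    (hY' : ∀ y ∈ Sᶜ,
      ({z ∈ Y' | H.neighborSet z = H.neighborSet y}).ncard =
        min 2 ({z ∈ Sᶜ | H.neighborSet z = H.neighborSet y}).ncard)
    (A B : Set W) (hA : A ⊆ R') (hB : B ⊆ R') :
    sInf {n | ∃ D : Set W, IsABDominator H R' A B D ∧ D.ncard = n} =
      sInf {n | ∃ D : Set ↥(S ∪ Y'),
        IsABDominator (H.induce (S ∪ Y')) (Subtype.val ⁻¹' R')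
          (Subtype.val ⁻¹' A) (Subtype.val ⁻¹' B) D ∧ D.ncard = n} := by
  classical
  set U : Set W := S ∪ Y' with hU
  have hSU : S ⊆ U := subset_union_left
  have hY'U : Y' ⊆ U := subset_union_right
  have hAS : A ⊆ S := fun a ha => hR'S (hA ha)
  -- nonemptiness of twin representatives
  have hrepne : ∀ w ∈ Sᶜ,
      ({z ∈ Y' | H.neighborSet z = H.neighborSet w}).Nonempty := by
    intro w hw
    rw [← Set.ncard_pos (Set.toFinite _), hY' w hw]
    have : 0 < ({z ∈ Sᶜ | H.neighborSet z = H.neighborSet w}).ncard := by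
      rw [Set.ncard_pos (Set.toFinite _)]
      exact ⟨w, hw, rfl⟩
    omega
  -- for vertices outside U, there are two distinct twins in Y'
  have htwo : ∀ y ∈ Sᶜ, y ∉ Y' → ∃ z₁ z₂, z₁ ≠ z₂ ∧ z₁ ∈ Y' ∧ z₂ ∈ Y' ∧
      H.neighborSet z₁ = H.neighborSet y ∧ H.neighborSet z₂ = H.neighborSet y := by
    intro y hy hyY'
    set C : Set W := {z ∈ Sᶜ | H.neighborSet z = H.neighborSet y} with hC
    set CY : Set W := {z ∈ Y' | H.neighborSet z = H.neighborSet y} with hCY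
    have hsub : CY ⊆ C := fun z hz => ⟨hY'sub hz.1, hz.2⟩
    have hcard : CY.ncard = min 2 C.ncard := hY' y hy
    have h2 : CY.ncard = 2 := by
      by_contra hne
      have hlt : CY.ncard = C.ncard := by omega
      have : CY = C := Set.eq_of_subset_of_ncard_le hsub (le_of_eq hlt.symm)
        (Set.toFinite _)
      have hyC : y ∈ C := ⟨hy, rfl⟩
      rw [← this] at hyC
      exact hyY' hyC.1
    obtain ⟨z₁, z₂, hne, heq⟩ := Set.ncard_eq_two.mp h2
    have h1 : z₁ ∈ CY := by rw [heq]; exact Or.inl rfl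
    have h2' : z₂ ∈ CY := by rw [heq]; exact Or.inr rfl
    exact ⟨z₁, z₂, hne, h1.1, h2'.1, h1.2, h2'.2⟩
  apply sInf_eq_of_le
  · -- from an H-dominator build an H'-dominator of no larger size
    rintro n ⟨D, ⟨hDA, hDdom⟩, rfl⟩
    set f : W → W := fun w =>
      if h : ({z ∈ Y' | H.neighborSet z = H.neighborSet w}).Nonempty
      then h.some else w with hf
    have hfmem : ∀ w ∈ Sᶜ, f w ∈ Y' ∧
        H.neighborSet (f w) = H.neighborSet w := by
      intro w hw
      have h := hrepne w hw
      simp only [hf, dif_pos h]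
      exact ⟨h.some_mem.1, h.some_mem.2⟩
    set D₁ : Set W := (D ∩ U) ∪ (f '' (D \ U)) with hD₁
    have hD₁U : D₁ ⊆ U := by
      rintro w (hw | ⟨v, hv, rfl⟩)
      · exact hw.2
      · exact hY'U (hfmem v (fun hvS => hv.2 (hSU hvS))).1
    refine ⟨(Subtype.val ⁻¹' D₁ : Set ↥U).ncard, ⟨Subtype.val ⁻¹' D₁, ⟨?_, ?_⟩, rfl⟩, ?_⟩
    · -- boundary condition
      have hD₁R : D₁ ∩ R' = A := by
        rw [hD₁, Set.union_inter_distrib_right]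
        have h1 : (D ∩ U) ∩ R' = A := by
          rw [Set.inter_assoc, Set.inter_comm U R',
            Set.inter_eq_self_of_subset_left (hR'S.trans hSU), hDA]
        have h2 : (f '' (D \ U)) ∩ R' = ∅ := by
          ext w
          simp only [Set.mem_inter_iff, Set.mem_image, Set.mem_empty_iff_false,
            iff_false, not_and]
          rintro ⟨v, hv, rfl⟩ hwR
          exact hY'sub (hfmem v (fun hvS => hv.2 (hSU hvS))).1 (hR'S hwR)
        rw [h1, h2, Set.union_empty]
      ext ⟨w, hw⟩
      constructor
      · rintro ⟨h1, h2⟩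
        exact (hD₁R ▸ (⟨h1, h2⟩ : w ∈ D₁ ∩ R') : w ∈ A)
      · intro hwA
        have : w ∈ D₁ ∩ R' := hD₁R ▸ hwA
        exact ⟨this.1, this.2⟩
    · -- domination condition
      rintro ⟨w, hw⟩ hcond
      have hcond' : w ∉ R' ∨ w ∈ B := hcond
      rcases hDdom w hcond' with hwD | ⟨u, huD, hadjuw⟩
      · exact Or.inl (show w ∈ D₁ from Or.inl ⟨hwD, hw⟩)
      · by_cases huU : u ∈ U
        · refine Or.inr ⟨⟨u, huU⟩, Or.inl ⟨huD, huU⟩, ?_⟩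
          simp [SimpleGraph.induce]
          exact hadjuw
        · have huS : u ∈ Sᶜ := fun huS => huU (hSU huS)
          obtain ⟨hfY', hfN⟩ := hfmem u huS
          refine Or.inr ⟨⟨f u, hY'U hfY'⟩, Or.inr ⟨u, ⟨huD, huU⟩, rfl⟩, ?_⟩
          simp only [SimpleGraph.induce]
          have : w ∈ H.neighborSet (f u) := by
            rw [hfN]; exact hadjuw
          simpa using this
    · -- size bound
      have him : Subtype.val '' (Subtype.val ⁻¹' D₁ : Set ↥U) = D₁ := by
        rw [Set.image_preimage_eq_inter_range, Subtype.range_coe]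
        exact Set.inter_eq_self_of_subset_left hD₁U
      have h1 : (Subtype.val ⁻¹' D₁ : Set ↥U).ncard = D₁.ncard := by
        have := Set.ncard_image_of_injective (Subtype.val ⁻¹' D₁ : Set ↥U)
          Subtype.val_injective
        rw [him] at this
        exact this.symm
      rw [h1]
      calc D₁.ncard ≤ (D ∩ U).ncard + (f '' (D \ U)).ncard :=
            Set.ncard_union_le _ _
        _ ≤ (D ∩ U).ncard + (D \ U).ncard :=
            Nat.add_le_add_left (Set.ncard_image_le (Set.toFinite _)) _
        _ = D.ncard := Set.ncard_inter_add_ncard_diff_eq_ncard D U (Set.toFinite _)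
  · -- from an H'-dominator build an H-dominator of no larger size
    rintro n ⟨D', ⟨hDA, hDdom⟩, rfl⟩
    set D₀ : Set W := Subtype.val '' D' with hD₀
    have hD₀n : D₀.ncard = D'.ncard :=
      Set.ncard_image_of_injective _ Subtype.val_injective
    have hD₀U : D₀ ⊆ U := by rintro w ⟨⟨v, hv⟩, _, rfl⟩; exact hv
    have hA0 : D₀ ∩ R' = A := by
      ext w
      simp only [Set.mem_inter_iff, hD₀, Set.mem_image]
      constructor
      · rintro ⟨⟨⟨v, hv⟩, hvD, rfl⟩, hwR⟩
        have : (⟨v, hv⟩ : ↥U) ∈ D' ∩ (Subtype.val ⁻¹' R') := ⟨hvD, hwR⟩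
        rw [hDA] at this
        exact this
      · intro hwA
        have hwU : w ∈ U := hSU (hAS hwA)
        have : (⟨w, hwU⟩ : ↥U) ∈ Subtype.val ⁻¹' A := hwA
        rw [← hDA] at this
        exact ⟨⟨⟨w, hwU⟩, this.1, rfl⟩, hA hwA⟩
    have hdom0 : ∀ w ∈ U, (w ∉ R' ∨ w ∈ B) → w ∈ D₀ ∨ ∃ u ∈ D₀, H.Adj u w := by
      intro w hwU hcond
      rcases hDdom ⟨w, hwU⟩ hcond with h | ⟨u, huD, hadjH⟩
      · exact Or.inl ⟨⟨w, hwU⟩, h, rfl⟩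
      · refine Or.inr ⟨u.val, ⟨u, huD, rfl⟩, ?_⟩
        simpa [SimpleGraph.induce] using hadjH
    by_cases hc : ∃ z₁ ∈ D₀, ∃ z₂ ∈ D₀, z₁ ∉ S ∧ z₂ ∉ S ∧ z₁ ≠ z₂ ∧
        H.neighborSet z₁ = H.neighborSet z₂
    · obtain ⟨z₁, hz₁, z₂, hz₂, hz₁S, hz₂S, hzne, hzN⟩ := hc
      refine ⟨(insert x (D₀ \ {z₂})).ncard, ⟨insert x (D₀ \ {z₂}), ⟨?_, ?_⟩, rfl⟩, ?_⟩
      · -- boundary condition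
        ext w
        simp only [Set.mem_inter_iff, Set.mem_insert_iff, Set.mem_diff,
          Set.mem_singleton_iff]
        constructor
        · rintro ⟨hw1 | ⟨hwD, -⟩, hwR⟩
          · exact absurd (hw1 ▸ hwR) hxR'
          · exact hA0 ▸ (⟨hwD, hwR⟩ : w ∈ D₀ ∩ R')
        · intro hwA
          have hw : w ∈ D₀ ∩ R' := hA0 ▸ hwA
          exact ⟨Or.inr ⟨hw.1, fun h => hz₂S (h ▸ hR'S hw.2)⟩, hw.2⟩
      · -- domination
        intro v hcond
        by_cases hvS : v ∈ S
        · rcases hdom0 v (hSU hvS) hcond with hvD | ⟨u, huD, hadjuv⟩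
          · exact Or.inl (Or.inr ⟨hvD, fun h => hz₂S (h ▸ hvS)⟩)
          · by_cases huz : u = z₂
            · refine Or.inr ⟨z₁, Or.inr ⟨hz₁, hzne⟩, ?_⟩
              have : v ∈ H.neighborSet z₁ := by
                rw [hzN]; exact (huz ▸ hadjuv : H.Adj z₂ v)
              exact this
            · exact Or.inr ⟨u, Or.inr ⟨huD, huz⟩, hadjuv⟩
        · exact Or.inr ⟨x, Or.inl rfl, hadj v hvS⟩
      · -- size
        rw [hD₀n.symm]
        have h1 : (insert x (D₀ \ {z₂})).ncard ≤ (D₀ \ {z₂}).ncard + 1 :=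
          Set.ncard_insert_le _ _
        have h2 : (D₀ \ {z₂}).ncard = D₀.ncard - 1 :=
          Set.ncard_diff_singleton_of_mem hz₂
        have h3 : 1 ≤ D₀.ncard := by
          rw [Nat.one_le_iff_ne_zero, ← Nat.pos_iff_ne_zero,
            Set.ncard_pos (Set.toFinite _)]
          exact ⟨z₂, hz₂⟩
        omega
    · refine ⟨D₀.ncard, ⟨D₀, ⟨hA0, ?_⟩, rfl⟩, le_of_eq hD₀n⟩
      intro v hcond
      by_cases hvU : v ∈ U
      · exact hdom0 v hvU hcond
      · have hvS : v ∈ Sᶜ := fun hvS => hvU (hSU hvS)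
        have hvY' : v ∉ Y' := fun h => hvU (hY'U h)
        obtain ⟨z₁, z₂, hzne, hz₁Y, hz₂Y, hz₁N, hz₂N⟩ := htwo v hvS hvY'
        have hone : z₁ ∉ D₀ ∨ z₂ ∉ D₀ := by
          by_contra h
          push_neg at h
          exact hc ⟨z₁, h.1, z₂, h.2, hY'sub hz₁Y, hY'sub hz₂Y, hzne,
            hz₁N.trans hz₂N.symm⟩
        obtain ⟨z, hzY, hzN, hzD⟩ : ∃ z, z ∈ Y' ∧
            H.neighborSet z = H.neighborSet v ∧ z ∉ D₀ := by
          rcases hone with h | h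
          · exact ⟨z₁, hz₁Y, hz₁N, h⟩
          · exact ⟨z₂, hz₂Y, hz₂N, h⟩
        have hzR : z ∉ R' := fun h => hY'sub hzY (hR'S h)
        rcases hdom0 z (hY'U hzY) (Or.inl hzR) with h | ⟨u, huD, hadjuz⟩
        · exact absurd h hzD
        · refine Or.inr ⟨u, huD, ?_⟩
          have : u ∈ H.neighborSet v := by
            rw [← hzN]; exact hadjuz.symm
          exact this.symm
end

section
/- Let G be a finite simple graph, X ⊆ V(G) a 3-independent set, R := V(G) ∖ N[X] the residual set, and X' ⊆ X a subset such that N^2(x) ∩ R = R' for every x ∈ X' (the same set R' for all of them). Then for every dominating set D of G there exists a dominating set D' of G with |D'| ≤ |D| such that D' ∩ N[x] = {x} for all but at most |R'| vertices x ∈ X'. -/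
/-- Let `X` be a `3`-independent set of a finite simple graph `G`,
`R = V(G) ∖ N[X]`, and `X' ⊆ X` a set of vertices all satisfying
`N²(x) ∩ R = R'` for one common set `R'`.  Then for every dominating set `D`
of `G` there is a dominating set `D'` with `|D'| ≤ |D|` such that
`D' ∩ N[x] = {x}` for all but at most `|R'|` vertices `x ∈ X'`. -/
theorem exists_uninteresting_dominating {V : Type*} [Fintype V]
    (G : SimpleGraph V) (X : Set V) (hX : rIndependent G 3 X)
    (X' : Set V) (hX'sub : X' ⊆ X) (R' : Set V)
    (hR' : ∀ x ∈ X', (ball2 G x \ {x}) ∩ (closedNbhdSet G X)ᶜ = R')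
    (D : Set V) (hD : IsDominating G D) :
    ∃ D' : Set V, IsDominating G D' ∧ D'.ncard ≤ D.ncard ∧
      {x ∈ X' | D' ∩ closedNbhd G x ≠ {x}}.ncard ≤ R'.ncard := by
  classical
  -- a vertex in a closed neighbourhood gives a walk of length ≤ 1
  have nbhd_walk : ∀ x v : V, v ∈ closedNbhd G x → ∃ p : G.Walk x v, p.length ≤ 1 := by
    intro x v hv
    rcases Set.mem_insert_iff.mp hv with rfl | hv
    · exact ⟨SimpleGraph.Walk.nil, by simp⟩
    · have hv' : G.Adj x v := hv
      exact ⟨SimpleGraph.Walk.cons hv' SimpleGraph.Walk.nil, by simp⟩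
  have nbhd_symm : ∀ u v : V, u ∈ closedNbhd G v → v ∈ closedNbhd G u := by
    intro u v h
    rcases Set.mem_insert_iff.mp h with rfl | h
    · exact Set.mem_insert _ _
    · exact Set.mem_insert_iff.mpr (Or.inr h.symm)
  have self_mem : ∀ x : V, x ∈ closedNbhd G x := fun x => Set.mem_insert _ _
  -- closed neighbourhoods of distinct vertices of X are disjoint
  have key : ∀ x ∈ X, ∀ y ∈ X, ∀ v : V,
      v ∈ closedNbhd G x → v ∈ closedNbhd G y → x = y := by
    intro x hx y hy v hvx hvy
    by_contra hne
    obtain ⟨p, hp⟩ := nbhd_walk x v hvx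
    obtain ⟨q, hq⟩ := nbhd_walk y v hvy
    have h4 := hX x hx y hy hne (p.append q.reverse)
    rw [SimpleGraph.Walk.length_append, SimpleGraph.Walk.length_reverse] at h4
    omega
  -- the ball of radius 2 decomposes
  have ball2_sub : ∀ x ∈ X', ∀ v : V, v ∈ ball2 G x →
      v ∈ closedNbhd G x ∨ v ∈ R' := by
    intro x hx v hv
    by_cases hvN : v ∈ closedNbhd G x
    · exact Or.inl hvN
    right
    rw [← hR' x hx]
    obtain ⟨p, hp⟩ := hv
    refine ⟨⟨⟨p, hp⟩, ?_⟩, ?_⟩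
    · intro h
      exact hvN (by rw [Set.mem_singleton_iff.mp h]; exact self_mem x)
    · intro hvX
      rcases hvX with hvX | hvX
      · have hne : x ≠ v := by rintro rfl; exact hvN (self_mem x)
        have := hX x (hX'sub hx) v hvX hne p
        omega
      · rw [Set.mem_iUnion₂] at hvX
        obtain ⟨y, hy, hadj⟩ := hvX
        have hadj' : G.Adj y v := hadj
        have hne : x ≠ y := by
          rintro rfl
          exact hvN (Set.mem_insert_iff.mpr (Or.inr hadj'))
        have := hX x (hX'sub hx) y hy hne
          (p.append (SimpleGraph.Walk.cons hadj'.symm SimpleGraph.Walk.nil))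
        rw [SimpleGraph.Walk.length_append] at this
        simp at this
        omega
  -- choose a dominator for every vertex
  have hdomall : ∀ r : V, ∃ u, u ∈ D ∧ u ∈ closedNbhd G r := by
    intro r
    rcases hD r with h | ⟨u, hu, hadj⟩
    · exact ⟨r, h, self_mem r⟩
    · exact ⟨u, hu, Set.mem_insert_iff.mpr (Or.inr hadj.symm)⟩
  choose dfun hdD hdN using hdomall
  set K : Set V := dfun '' R' with hK
  set B' : Set V := {x ∈ X' | ∀ k ∈ K, k ∉ closedNbhd G x} with hB'
  set U : Set V := ⋃ x ∈ B', closedNbhd G x with hU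
  set D' : Set V := (D \ U) ∪ B' with hD'
  have hB'X' : B' ⊆ X' := fun x hx => hx.1
  have hUB : ∀ x ∈ B', closedNbhd G x ⊆ U := by
    intro x hx v hv
    exact Set.mem_iUnion₂.mpr ⟨x, hx, hv⟩
  refine ⟨D', ?_, ?_, ?_⟩
  · -- domination
    intro v
    by_cases hu : dfun v ∈ U
    · obtain ⟨x, hxB', hux⟩ := Set.mem_iUnion₂.mp hu
      have hvball : v ∈ ball2 G x := by
        obtain ⟨p, hp⟩ := nbhd_walk x (dfun v) hux
        obtain ⟨q, hq⟩ := nbhd_walk (dfun v) v (nbhd_symm _ _ (hdN v))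
        refine ⟨p.append q, ?_⟩
        rw [SimpleGraph.Walk.length_append]; omega
      rcases ball2_sub x (hB'X' hxB') v hvball with hvN | hvR
      · rcases Set.mem_insert_iff.mp hvN with rfl | hadj
        · exact Or.inl (Or.inr hxB')
        · exact Or.inr ⟨x, Or.inr hxB', hadj⟩
      · exact absurd hux (hxB'.2 (dfun v) ⟨v, hvR, rfl⟩)
    · rcases Set.mem_insert_iff.mp (hdN v) with heq | hadj
      · exact Or.inl (Or.inl ⟨heq ▸ hdD v, heq ▸ hu⟩)
      · exact Or.inr ⟨dfun v, Or.inl ⟨hdD v, hu⟩, hadj.symm⟩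
  · -- size
    have h1 : D'.ncard ≤ (D \ U).ncard + B'.ncard := Set.ncard_union_le _ _
    have h2 : B'.ncard ≤ (D ∩ U).ncard := by
      apply Set.ncard_le_ncard_of_injOn dfun
      · intro x hx
        exact ⟨hdD x, hUB x hx (hdN x)⟩
      · intro a ha b hb hab
        exact key a (hX'sub (hB'X' ha)) b (hX'sub (hB'X' hb)) (dfun a)
          (hdN a) (hab ▸ hdN b)
    have h3 : (D ∩ U).ncard + (D \ U).ncard = D.ncard :=
      Set.ncard_inter_add_ncard_diff_eq_ncard D U (Set.toFinite D)
    omega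
  · -- few bad vertices
    have hgood : ∀ x ∈ B', D' ∩ closedNbhd G x = {x} := by
      intro x hx
      ext v
      simp only [Set.mem_inter_iff, Set.mem_singleton_iff]
      constructor
      · rintro ⟨hvD', hvN⟩
        rcases hvD' with ⟨hvD, hvU⟩ | hvB'
        · exact absurd (hUB x hx hvN) hvU
        · exact key v (hX'sub (hB'X' hvB')) x (hX'sub (hB'X' hx)) v
            (self_mem v) hvN
      · rintro rfl
        exact ⟨Or.inr hx, self_mem v⟩
    have hbadsub : {x ∈ X' | D' ∩ closedNbhd G x ≠ {x}} ⊆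
        {x ∈ X' | ∃ r ∈ R', dfun r ∈ closedNbhd G x} := by
      rintro x ⟨hx, hne⟩
      refine ⟨hx, ?_⟩
      by_contra h
      push_neg at h
      refine hne (hgood x ⟨hx, ?_⟩)
      rintro k ⟨r, hr, rfl⟩
      exact h r hr
    have hstep : {x ∈ X' | ∃ r ∈ R', dfun r ∈ closedNbhd G x}.ncard ≤ R'.ncard := by
      set f : V → V := fun x =>
        if h : ∃ r ∈ R', dfun r ∈ closedNbhd G x then h.choose else x with hf
      have hf1 : ∀ x ∈ {x ∈ X' | ∃ r ∈ R', dfun r ∈ closedNbhd G x},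
          f x ∈ R' ∧ dfun (f x) ∈ closedNbhd G x := by
        intro x hx
        simp only [hf, dif_pos hx.2]
        exact hx.2.choose_spec
      apply Set.ncard_le_ncard_of_injOn f
      · intro x hx; exact (hf1 x hx).1
      · intro a ha b hb hab
        have h1 := (hf1 a ha).2
        have h2 := (hf1 b hb).2
        rw [hab] at h1
        exact key a (hX'sub ha.1) b (hX'sub hb.1) (dfun (f b)) h1 h2
    calc {x ∈ X' | D' ∩ closedNbhd G x ≠ {x}}.ncard
        ≤ {x ∈ X' | ∃ r ∈ R', dfun r ∈ closedNbhd G x}.ncard :=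
          Set.ncard_le_ncard hbadsub (Set.toFinite _)
      _ ≤ R'.ncard := hstep
end
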